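/- Energy estimate for the Hermite spectral viscosity scheme with viscosity term ε ∂_x D_x Q_m u (Lemma on apriori estimates): Let α > 0, T > 0, ε > 0, integers 0 < m < N, multipliers q̂_0, …, q̂_N with q̂_k = 0 for k ≤ m and 1 − m/k ≤ q̂_k < 1 for k > m, f ∈ C¹(ℝ) with f(0) = 0 admitting a C¹ primitive F̄ of y ↦ y f'(y), and u₀ ∈ L²(ℝ). Suppose u : [0,T] → R_N is of the form u(t) = Σ_{k=0}^N û_k(t) H_k^α with each û_k differentiable on [0,T], u(0) = P_N u₀, and for every t ∈ [0,T] and every φ ∈ R_N: ∫_ℝ (∂_t u)(t,x) φ(x) dx + ∫_ℝ ∂_x(P_{N+1}(f∘u(t)))(x) φ(x) dx − ε ∫_ℝ ∂_x(D_x Q_m u(t))(x) φ(x) dx = 0. Then for every γ > α²/2, ‖u(T)‖² + 2ε(1 − α²/(2γ)) ∫_0^T ‖D_x Q_m u(t)‖² dt ≤ ‖P_N u₀‖² + ε α² γ ∫_0^T ‖x u(t)‖² dt. -/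

import Mathlib

open MeasureTheory Real

/-- Physicists' Hermite polynomial: `ℋ_n(x) = (−1)^n e^{x²} (dⁿ/dxⁿ) e^{−x²}`. -/
noncomputable def physHermite (n : ℕ) : ℝ → ℝ :=
  fun x => (-1 : ℝ) ^ n * Real.exp (x ^ 2) * iteratedDeriv n (fun y => Real.exp (-(y ^ 2))) x

/-- Generalized Hermite function `H_n^α(x) = (α/(2^n n! √π))^{1/2} ℋ_n(αx) e^{−α²x²/2}`. -/
noncomputable def genHermite (α : ℝ) (n : ℕ) : ℝ → ℝ :=
  fun x => Real.sqrt (α / (2 ^ n * n.factorial * Real.sqrt Real.pi)) *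
    physHermite n (α * x) * Real.exp (-(α ^ 2 * x ^ 2) / 2)

/-- Integer-indexed generalized Hermite function, with the convention `H_n^α ≡ 0` for `n < 0`. -/
noncomputable def genHermiteZ (α : ℝ) (n : ℤ) : ℝ → ℝ :=
  fun x => if 0 ≤ n then genHermite α n.toNat x else 0

/-- The operator `D_x = ∂_x + α² x`. -/
noncomputable def Dx (α : ℝ) (u : ℝ → ℝ) : ℝ → ℝ :=
  fun x => deriv u x + α ^ 2 * x * u x

/-- The Sturm–Liouville operator
`L_α(u)(x) = −e^{α²x²/2} ∂_x(e^{−α²x²} ∂_x(e^{α²x²/2} u(x)))`. -/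
noncomputable def SLop (α : ℝ) (u : ℝ → ℝ) : ℝ → ℝ :=
  fun x => -(Real.exp (α ^ 2 * x ^ 2 / 2) *
    deriv (fun y => Real.exp (-(α ^ 2 * y ^ 2)) *
      deriv (fun z => Real.exp (α ^ 2 * z ^ 2 / 2) * u z) y) x)


open Polynomial Filter

noncomputable def HP : ℕ → Polynomial ℝ
  | 0 => 1
  | (n+1) => 2 * (Polynomial.X * HP n) - Polynomial.derivative (HP n)

lemma HP_zero : HP 0 = 1 := rfl
lemma HP_succ (n : ℕ) : HP (n+1) = 2 * (Polynomial.X * HP n) - Polynomial.derivative (HP n) := rfl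

lemma gauss_hasDerivAt (x : ℝ) :
    HasDerivAt (fun y : ℝ => Real.exp (-(y ^ 2))) (-2*x * Real.exp (-(x ^ 2))) x := by
  have h : HasDerivAt (fun y : ℝ => -(y ^ 2)) (-2*x) x := by
    simpa using ((hasDerivAt_pow 2 x).fun_neg)
  simpa [mul_comm] using h.exp

lemma iteratedDeriv_gauss (n : ℕ) (x : ℝ) :
    iteratedDeriv n (fun y : ℝ => Real.exp (-(y ^ 2))) x
      = (-1 : ℝ) ^ n * (HP n).eval x * Real.exp (-(x ^ 2)) := by
  induction n generalizing x with
  | zero => simp [HP_zero]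
  | succ n ih =>
    have ih' : iteratedDeriv n (fun y : ℝ => Real.exp (-(y ^ 2)))
        = fun x => (-1 : ℝ) ^ n * (HP n).eval x * Real.exp (-(x ^ 2)) := funext ih
    rw [iteratedDeriv_succ, ih']
    have h : HasDerivAt (fun x : ℝ => (-1 : ℝ) ^ n * (HP n).eval x * Real.exp (-(x ^ 2)))
        ((-1 : ℝ) ^ (n+1) * (HP (n+1)).eval x * Real.exp (-(x ^ 2))) x := by
      have h1 : HasDerivAt (fun x : ℝ => (-1 : ℝ) ^ n * (HP n).eval x)
          ((-1 : ℝ) ^ n * (Polynomial.derivative (HP n)).eval x) x :=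
        ((HP n).hasDerivAt x).const_mul _
      have := h1.fun_mul (gauss_hasDerivAt x)
      refine this.congr_deriv ?_
      simp [HP_succ]
      ring
    exact h.deriv

lemma physHermite_eq (n : ℕ) (x : ℝ) : physHermite n x = (HP n).eval x := by
  rw [physHermite, iteratedDeriv_gauss]
  rw [show (-1:ℝ)^n * Real.exp (x^2) * ((-1:ℝ)^n * (HP n).eval x * Real.exp (-(x^2)))
    = ((-1:ℝ)^n)^2 * ((Real.exp (x^2) * Real.exp (-(x^2))) * (HP n).eval x) by ring]
  rw [← Real.exp_add]
  simp [← pow_mul, pow_mul']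

lemma HP_deriv (n : ℕ) :
    Polynomial.derivative (HP n) = 2 * (n : Polynomial ℝ) * HP (n - 1) := by
  induction n with
  | zero => simp [HP_zero]
  | succ n ih =>
    rw [HP_succ]
    simp only [Nat.add_sub_cancel]
    rw [Polynomial.derivative_sub, Polynomial.derivative_mul, Polynomial.derivative_mul]
    cases n with
    | zero => simp [HP_zero, HP_succ]
    | succ m =>
      rw [ih]
      simp only [Nat.add_sub_cancel]
      rw [Polynomial.derivative_mul, Polynomial.derivative_mul, HP_succ]
      push_cast
      simp only [Polynomial.derivative_ofNat, Polynomial.derivative_X, Polynomial.derivative_add, Polynomial.derivative_natCast, Polynomial.derivative_one, add_zero, zero_add, mul_zero, Polynomial.derivative_mul]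
      ring

/-- three-term recurrence: `2 x HP n = HP (n+1) + 2 n HP (n-1)` -/
lemma HP_rec (n : ℕ) :
    2 * Polynomial.X * HP n = HP (n+1) + 2 * (n : Polynomial ℝ) * HP (n - 1) := by
  rw [HP_succ, ← HP_deriv]; ring


/-- Predicate: `f` is a polynomial times the Gaussian `exp (-(b x²))`. -/
def PG (b : ℝ) (f : ℝ → ℝ) : Prop := ∃ p : Polynomial ℝ, ∀ x, f x = p.eval x * Real.exp (-(b * x^2))

namespace PG

lemma const_mul {b f} (h : PG b f) (c : ℝ) : PG b (fun x => c * f x) := by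
  obtain ⟨p, hp⟩ := h; exact ⟨Polynomial.C c * p, fun x => by simp [hp x]; ring⟩

lemma add {b f g} (hf : PG b f) (hg : PG b g) : PG b (fun x => f x + g x) := by
  obtain ⟨p, hp⟩ := hf; obtain ⟨q, hq⟩ := hg
  exact ⟨p + q, fun x => by simp [hp x, hq x]; ring⟩

lemma sub {b f g} (hf : PG b f) (hg : PG b g) : PG b (fun x => f x - g x) := by
  obtain ⟨p, hp⟩ := hf; obtain ⟨q, hq⟩ := hg
  exact ⟨p - q, fun x => by simp [hp x, hq x]; ring⟩

lemma zero (b : ℝ) : PG b (fun _ => 0) := ⟨0, by simp⟩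

lemma sum {b : ℝ} {s : Finset ℕ} {F : ℕ → ℝ → ℝ} (h : ∀ k ∈ s, PG b (F k)) :
    PG b (fun x => ∑ k ∈ s, F k x) := by
  classical
  induction s using Finset.induction with
  | empty => simpa using zero b
  | @insert a s hk ih =>
    simp only [Finset.sum_insert hk]
    exact (h a (Finset.mem_insert_self a s)).add (ih fun k hks => h k (Finset.mem_insert_of_mem hks))

lemma mul {b c f g} (hf : PG b f) (hg : PG c g) : PG (b + c) (fun x => f x * g x) := by
  obtain ⟨p, hp⟩ := hf; obtain ⟨q, hq⟩ := hg
  refine ⟨p * q, fun x => ?_⟩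
  simp only []
  rw [hp x, hq x, show -((b+c)*x^2) = -(b*x^2) + -(c*x^2) by ring, Real.exp_add]
  simp; ring

lemma x_mul {b f} (h : PG b f) : PG b (fun x => x * f x) := by
  obtain ⟨p, hp⟩ := h; exact ⟨Polynomial.X * p, fun x => by simp [hp x]; ring⟩

lemma continuous {b f} (h : PG b f) : Continuous f := by
  obtain ⟨p, hp⟩ := h
  have : f = fun x => p.eval x * Real.exp (-(b*x^2)) := funext hp
  rw [this]
  fun_prop

lemma tendsto_atTop {b f} (hb : 0 < b) (h : PG b f) : Tendsto f atTop (nhds 0) := by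
  obtain ⟨p, hp⟩ := h
  have key : Tendsto (fun x : ℝ => (p.comp (Polynomial.C b⁻¹ * Polynomial.X)).eval (b*x)
      / Real.exp (b*x)) atTop (nhds 0) :=
    (Polynomial.tendsto_div_exp_atTop _).comp (tendsto_id.const_mul_atTop hb)
  have hcomp : ∀ x : ℝ, (p.comp (Polynomial.C b⁻¹ * Polynomial.X)).eval (b*x) = p.eval x := by
    intro x; simp [Polynomial.eval_comp, inv_mul_cancel_left₀ hb.ne']
  simp only [hcomp] at key
  have key2 : Tendsto (fun x : ℝ => |p.eval x / Real.exp (b*x)|) atTop (nhds 0) := by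
    have := key.abs; simpa using this
  apply squeeze_zero_norm' _ key2
  filter_upwards [eventually_ge_atTop (1:ℝ)] with x hx
  rw [hp x]
  have h1 : Real.exp (-(b*x^2)) ≤ Real.exp (-(b*x)) := by
    apply Real.exp_le_exp.2
    nlinarith [hb.le, sq_nonneg x, mul_le_mul_of_nonneg_left (show (1:ℝ)*x ≤ x*x by nlinarith) hb.le]
  rw [Real.norm_eq_abs, abs_mul, abs_div, Real.abs_exp, Real.abs_exp]
  rw [div_eq_mul_inv, ← Real.exp_neg]
  exact mul_le_mul_of_nonneg_left h1 (abs_nonneg _)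

lemma tendsto_atBot {b f} (hb : 0 < b) (h : PG b f) : Tendsto f atBot (nhds 0) := by
  obtain ⟨p, hp⟩ := h
  have h2 : PG b (fun y => (p.comp (-Polynomial.X)).eval y * Real.exp (-(b*y^2))) :=
    ⟨p.comp (-Polynomial.X), fun _ => rfl⟩
  have := (tendsto_atTop hb h2).comp tendsto_neg_atBot_atTop
  refine this.congr fun x => ?_
  simp [Function.comp, Polynomial.eval_comp, hp x]

lemma bounded {b f} (hb : 0 < b) (h : PG b f) : ∃ C : ℝ, ∀ x, |f x| ≤ C := by
  have htop := (tendsto_atTop hb h).abs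
  have hbot := (tendsto_atBot hb h).abs
  simp only [abs_zero] at htop hbot
  obtain ⟨A, hA⟩ := (htop.eventually_le_const one_pos).exists_forall_of_atTop
  obtain ⟨B, hB⟩ := (hbot.eventually_le_const one_pos).exists_forall_of_atBot
  obtain ⟨C, hC⟩ := (isCompact_Icc (a := B) (b := A)).exists_bound_of_continuousOn
    ((continuous h).continuousOn (s := Set.Icc B A))
  refine ⟨max C 1, fun x => ?_⟩
  rcases le_or_gt x A with h1 | h1
  · rcases le_or_gt B x with h2 | h2
    · exact le_max_of_le_left (by simpa using hC x ⟨h2, h1⟩)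
    · exact le_max_of_le_right (hB x h2.le)
  · exact le_max_of_le_right (hA x h1.le)

lemma integrable {b f} (hb : 0 < b) (h : PG b f) : Integrable f := by
  obtain ⟨p, hp⟩ := h
  have hhalf : PG (b/2) (fun x => p.eval x * Real.exp (-(b/2 * x^2))) := ⟨p, fun _ => rfl⟩
  obtain ⟨C, hC⟩ := hhalf.bounded (by linarith)
  refine Integrable.mono' (g := fun x => C * Real.exp (-(b/2) * x^2))
    ((integrable_exp_neg_mul_sq (by linarith)).const_mul C)
    ((PG.continuous ⟨p, hp⟩).aestronglyMeasurable) (Filter.Eventually.of_forall fun x => ?_)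
  rw [Real.norm_eq_abs, hp x,
    show -(b*x^2) = -(b/2*x^2) + -(b/2*x^2) by ring, Real.exp_add, ← mul_assoc,
    abs_mul (p.eval x * Real.exp (-(b/2*x^2))), Real.abs_exp]
  calc |p.eval x * Real.exp (-(b/2*x^2))| * Real.exp (-(b/2*x^2))
      ≤ C * Real.exp (-(b/2*x^2)) :=
        mul_le_mul_of_nonneg_right (hC x) (Real.exp_nonneg _)
    _ = C * Real.exp (-(b/2) * x^2) := by ring_nf

end PG




lemma HPgauss_hasDerivAt (r : ℕ) (x : ℝ) :
    HasDerivAt (fun y => (HP r).eval y * Real.exp (-(y^2)))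
      (-((HP (r+1)).eval x * Real.exp (-(x^2)))) x := by
  have h := ((HP r).hasDerivAt x).fun_mul (gauss_hasDerivAt x)
  refine h.congr_deriv ?_
  rw [HP_succ]
  simp
  ring

lemma PG_HPgauss (r : ℕ) : PG 1 (fun y => (HP r).eval y * Real.exp (-(y^2))) :=
  ⟨HP r, fun x => by norm_num⟩

lemma PG_poly (p : Polynomial ℝ) : PG 0 (fun y => p.eval y) :=
  ⟨p, fun x => by norm_num⟩

lemma ibp_step (r : ℕ) (p : Polynomial ℝ) :
    ∫ x : ℝ, p.eval x * ((HP (r+1)).eval x * Real.exp (-(x^2)))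
      = ∫ x : ℝ, (Polynomial.derivative p).eval x * ((HP r).eval x * Real.exp (-(x^2))) := by
  have key := MeasureTheory.integral_mul_deriv_eq_deriv_mul_of_integrable
    (u := fun x => p.eval x) (u' := fun x => (Polynomial.derivative p).eval x)
    (v := fun y => (HP r).eval y * Real.exp (-(y^2)))
    (v' := fun x => -((HP (r+1)).eval x * Real.exp (-(x^2))))
    (fun x _ => p.hasDerivAt x) (fun x _ => HPgauss_hasDerivAt r x)
    ?_ ?_ ?_
  · have : ∫ x : ℝ, p.eval x * -((HP (r+1)).eval x * Real.exp (-(x^2)))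
        = -∫ x : ℝ, p.eval x * ((HP (r+1)).eval x * Real.exp (-(x^2))) := by
      rw [← MeasureTheory.integral_neg]; congr 1; funext x; ring
    rw [this] at key
    have := neg_injective key
    rw [this]
  · have hpg : PG 1 (fun x => p.eval x * -((HP (r+1)).eval x * Real.exp (-(x^2)))) :=
      ⟨-(p * HP (r+1)), fun x => by simp [one_mul]; ring⟩

    exact hpg.integrable one_pos
  · exact ((PG_poly (Polynomial.derivative p)).mul (PG_HPgauss r)).integrable (by norm_num)
  · exact ((PG_poly p).mul (PG_HPgauss r)).integrable (by norm_num)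

lemma ibp_iter (r : ℕ) (p : Polynomial ℝ) :
    ∫ x : ℝ, p.eval x * ((HP r).eval x * Real.exp (-(x^2)))
      = ∫ x : ℝ, ((Polynomial.derivative)^[r] p).eval x * Real.exp (-(x^2)) := by
  induction r generalizing p with
  | zero => simp [HP_zero]
  | succ r ih =>
    rw [ibp_step r p, ih (Polynomial.derivative p), Function.iterate_succ_apply]

lemma HP_iter_deriv (k : ℕ) : ∀ j : ℕ, (Polynomial.derivative)^[k] (HP j)
    = Polynomial.C ((2:ℝ)^k * (j.descFactorial k : ℕ)) * HP (j - k) := by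
  induction k with
  | zero => intro j; simp
  | succ k ih =>
    intro j
    rw [Function.iterate_succ_apply, HP_deriv]
    have hcast : (2 : Polynomial ℝ) * (j : Polynomial ℝ) = Polynomial.C (2 * (j:ℝ)) := by
      rw [Polynomial.C_mul]; norm_num [Polynomial.C_eq_natCast, map_ofNat]
    rw [hcast, Polynomial.iterate_derivative_C_mul, ih (j-1)]
    rw [← mul_assoc, ← Polynomial.C_mul]
    have hidx : j - 1 - k = j - (k+1) := by omega
    rw [hidx]
    congr 2
    have : j.descFactorial (k+1) = j * (j-1).descFactorial k := by
      cases j with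
      | zero => simp
      | succ m => rw [Nat.succ_descFactorial_succ]; simp
    rw [this]
    push_cast [Nat.cast_mul]
    ring

lemma integral_HP_gauss (m : ℕ) (hm : 0 < m) :
    ∫ x : ℝ, (HP m).eval x * Real.exp (-(x^2)) = 0 := by
  have h1 : ∫ x : ℝ, (1:Polynomial ℝ).eval x * ((HP m).eval x * Real.exp (-(x^2)))
      = ∫ x : ℝ, ((Polynomial.derivative)^[m] 1).eval x * Real.exp (-(x^2)) := ibp_iter m 1
  obtain ⟨m', rfl⟩ : ∃ m', m = m' + 1 := ⟨m - 1, by omega⟩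
  rw [Function.iterate_succ_apply', ] at h1
  have h2 : Polynomial.derivative ((Polynomial.derivative)^[m'] (1 : Polynomial ℝ)) = 0 := by
    rcases Nat.eq_zero_or_pos m' with h | h
    · subst h; simp
    · obtain ⟨m'', rfl⟩ : ∃ m'', m' = m'' + 1 := ⟨m' - 1, by omega⟩
      rw [Function.iterate_succ_apply]
      simp
  rw [h2] at h1
  simpa using h1

theorem Korth (j k : ℕ) :
    ∫ x : ℝ, (HP j).eval x * (HP k).eval x * Real.exp (-(x^2))
      = if j = k then 2^k * (k.factorial : ℝ) * Real.sqrt π else 0 := by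
  have h0 : ∫ x : ℝ, (HP j).eval x * (HP k).eval x * Real.exp (-(x^2))
      = ∫ x : ℝ, (HP j).eval x * ((HP k).eval x * Real.exp (-(x^2))) := by
    congr 1; funext x; ring
  rw [h0, ibp_iter k (HP j), HP_iter_deriv k j]
  simp only [Polynomial.eval_mul, Polynomial.eval_C]
  rcases lt_trichotomy j k with h | h | h
  · have : j.descFactorial k = 0 := Nat.descFactorial_eq_zero_iff_lt.2 h
    simp [this, if_neg h.ne]
  · subst h
    simp only [Nat.sub_self, HP_zero, Polynomial.eval_one, mul_one, if_pos rfl,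
      Nat.descFactorial_self]
    rw [MeasureTheory.integral_const_mul]
    have : ∫ x : ℝ, Real.exp (-(x^2)) = Real.sqrt π := by
      have := integral_gaussian 1
      simpa using this
    rw [this]
    simp
  · have hjk : 0 < j - k := by omega
    have : ∫ x : ℝ, (2:ℝ)^k * (j.descFactorial k : ℝ) * ((HP (j-k)).eval x * Real.exp (-(x^2)))
        = (2:ℝ)^k * (j.descFactorial k : ℝ) * ∫ x : ℝ, (HP (j-k)).eval x * Real.exp (-(x^2)) :=
      MeasureTheory.integral_const_mul _ _
    rw [show (fun x : ℝ => (2:ℝ)^k * (j.descFactorial k : ℝ) * (HP (j-k)).eval x * Real.exp (-(x^2)))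
      = fun x : ℝ => (2:ℝ)^k * (j.descFactorial k : ℝ) * ((HP (j-k)).eval x * Real.exp (-(x^2))) by
        funext x; ring] at *
    rw [this, integral_HP_gauss _ hjk, mul_zero, if_neg h.ne']

noncomputable def cst (α : ℝ) (k : ℕ) : ℝ := Real.sqrt (α / (2^k * k.factorial * Real.sqrt π))

section GH
variable {α : ℝ} (hα : 0 < α)

lemma genHermite_eq (k : ℕ) (x : ℝ) :
    genHermite α k x = cst α k * (HP k).eval (α*x) * Real.exp (-(α^2*x^2)/2) := by
  rw [genHermite, physHermite_eq, cst]

lemma PG_gen (k : ℕ) : PG (α^2/2) (genHermite α k) := by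
  refine ⟨Polynomial.C (cst α k) * (HP k).comp (Polynomial.C α * Polynomial.X), fun x => ?_⟩
  rw [genHermite_eq]
  simp [Polynomial.eval_comp]
  left
  congr 1
  ring

include hα

lemma cst_pos (k : ℕ) : 0 < cst α k := by
  apply Real.sqrt_pos.2
  have h1 : (0:ℝ) < Real.sqrt π := Real.sqrt_pos.2 Real.pi_pos
  positivity

lemma cst_ratio (k : ℕ) : cst α (k+1) * Real.sqrt (2*((k:ℝ)+1)) = cst α k := by
  rw [cst, cst, ← Real.sqrt_mul (by positivity)]
  congr 1
  have h1 : (0:ℝ) < Real.sqrt π := Real.sqrt_pos.2 Real.pi_pos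
  have h2 : ((k+1).factorial : ℝ) = ((k:ℝ)+1) * (k.factorial : ℝ) := by
    rw [Nat.factorial_succ]; push_cast; ring
  have h3 : (k.factorial : ℝ) ≠ 0 := Nat.cast_ne_zero.2 k.factorial_ne_zero
  rw [h2]
  field_simp
  ring

lemma cst_sq (k : ℕ) : cst α k ^ 2 = α / (2^k * k.factorial * Real.sqrt π) := by
  rw [cst, Real.sq_sqrt]
  have h1 : (0:ℝ) < Real.sqrt π := Real.sqrt_pos.2 Real.pi_pos
  positivity

/-- `cst k * 2k = √(2k) * cst (k-1)` -/
lemma cst_mulk (k : ℕ) : cst α k * (2*(k:ℝ)) = Real.sqrt (2*(k:ℝ)) * cst α (k-1) := by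
  cases k with
  | zero => simp
  | succ m =>
    have h := cst_ratio hα m
    rw [Nat.add_sub_cancel, ← h]
    rw [show ((m+1:ℕ):ℝ) = (m:ℝ)+1 by push_cast; ring]
    linear_combination (-(cst α (m+1))) *
      Real.mul_self_sqrt (show (0:ℝ) ≤ 2*((m:ℝ)+1) by positivity)

lemma gen_hasDerivAt (k : ℕ) (x : ℝ) :
    HasDerivAt (genHermite α k)
      (α * Real.sqrt (2*(k:ℝ)) * genHermite α (k-1) x - α^2 * x * genHermite α k x) x := by
  have hpoly : HasDerivAt (fun y : ℝ => (HP k).eval (α*y))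
      ((Polynomial.derivative (HP k)).eval (α*x) * α) x := by
    have hin : HasDerivAt (fun y : ℝ => α*y) α x := by
      simpa using (hasDerivAt_id x).const_mul α
    exact HasDerivAt.comp x ((HP k).hasDerivAt (α*x)) hin
  have hexp : HasDerivAt (fun y : ℝ => Real.exp (-(α^2*y^2)/2))
      (-(α^2*x) * Real.exp (-(α^2*x^2)/2)) x := by
    have hin : HasDerivAt (fun y : ℝ => -(α^2*y^2)/2) (-(α^2*x)) x := by
      have := ((hasDerivAt_pow 2 x).const_mul (α^2)).fun_neg.div_const 2
      refine this.congr_deriv ?_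
      ring
    simpa [mul_comm] using hin.exp
  have h := ((hpoly.const_mul (cst α k)).fun_mul hexp)
  have heq : (fun y => cst α k * (HP k).eval (α*y) * Real.exp (-(α^2*y^2)/2)) = genHermite α k := by
    funext y; rw [genHermite_eq]
  rw [heq] at h
  refine h.congr_deriv ?_
  rw [genHermite_eq, genHermite_eq, HP_deriv]
  simp only [Polynomial.eval_mul, Polynomial.eval_ofNat, Polynomial.eval_natCast]
  have hc := cst_mulk hα k
  linear_combination (α * (HP (k-1)).eval (α*x) * Real.exp (-(α^2*x^2)/2)) * hc

lemma gen_x_mul (k : ℕ) (x : ℝ) :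
    α^2 * x * genHermite α k x
      = α * Real.sqrt (((k:ℝ)+1)/2) * genHermite α (k+1) x
        + α * Real.sqrt ((k:ℝ)/2) * genHermite α (k-1) x := by
  have hrec := HP_rec k
  have heval : 2 * (α*x) * (HP k).eval (α*x)
      = (HP (k+1)).eval (α*x) + 2*(k:ℝ) * (HP (k-1)).eval (α*x) := by
    have := congrArg (Polynomial.eval (α*x)) hrec
    simpa using this
  have cstA : Real.sqrt (((k:ℝ)+1)/2) * cst α (k+1) = cst α k / 2 := by
    have h := cst_ratio hα k
    have h4 : Real.sqrt (2*((k:ℝ)+1)) = 2 * Real.sqrt (((k:ℝ)+1)/2) := by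
      rw [show 2*((k:ℝ)+1) = 4 * (((k:ℝ)+1)/2) by ring, show (4:ℝ) = 2^2 by norm_num,
        Real.sqrt_mul (by positivity), Real.sqrt_sq (by norm_num)]
    rw [h4] at h
    linarith [h]
  have cstB : Real.sqrt ((k:ℝ)/2) * cst α (k-1) = (k:ℝ) * cst α k := by
    have h := cst_mulk hα k
    have h4 : Real.sqrt (2*(k:ℝ)) = 2 * Real.sqrt ((k:ℝ)/2) := by
      rw [show 2*(k:ℝ) = 4 * ((k:ℝ)/2) by ring, show (4:ℝ) = 2^2 by norm_num,
        Real.sqrt_mul (by positivity), Real.sqrt_sq (by norm_num)]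
    rw [h4] at h
    nlinarith [h]
  rw [genHermite_eq, genHermite_eq, genHermite_eq]
  have key : α^2*x*(cst α k * (HP k).eval (α*x))
      = α * (Real.sqrt (((k:ℝ)+1)/2) * cst α (k+1)) * (HP (k+1)).eval (α*x)
        + α * (Real.sqrt ((k:ℝ)/2) * cst α (k-1)) * (HP (k-1)).eval (α*x) := by
    rw [cstA, cstB]
    linear_combination (α * cst α k / 2) * heval
  linear_combination (Real.exp (-(α^2*x^2)/2)) * key
end GH

section GH2
variable {α : ℝ} (hα : 0 < α)

noncomputable def ghSum (α : ℝ) (a : ℕ → ℝ) (M : ℕ) : ℝ → ℝ :=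
  fun x => ∑ k ∈ Finset.range M, a k * genHermite α k x

noncomputable def ghD (α : ℝ) (k : ℕ) (x : ℝ) : ℝ :=
  α*Real.sqrt ((k:ℝ)/2) * genHermite α (k-1) x
    - α*Real.sqrt (((k:ℝ)+1)/2) * genHermite α (k+1) x

lemma PG_ghD (k : ℕ) : PG (α^2/2) (ghD α k) := by
  have h1 := (PG_gen (α := α) (k-1)).const_mul (α*Real.sqrt ((k:ℝ)/2))
  have h2 := (PG_gen (α := α) (k+1)).const_mul (α*Real.sqrt (((k:ℝ)+1)/2))
  exact h1.sub h2

lemma PG_ghSum (a : ℕ → ℝ) (M : ℕ) : PG (α^2/2) (ghSum α a M) :=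
  PG.sum fun k _ => (PG_gen k).const_mul (a k)

include hα

lemma gen_orth (j k : ℕ) :
    ∫ x : ℝ, genHermite α j x * genHermite α k x = if j = k then 1 else 0 := by
  set φ : ℝ → ℝ := fun y => (HP j).eval y * (HP k).eval y * Real.exp (-(y^2)) with hφ
  have h1 : ∀ x : ℝ, genHermite α j x * genHermite α k x = cst α j * cst α k * φ (α * x) := by
    intro x
    rw [genHermite_eq, genHermite_eq, hφ]
    have hexp : Real.exp (-(α^2*x^2)/2) * Real.exp (-(α^2*x^2)/2)
        = Real.exp (-((α*x)^2)) := by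
      rw [← Real.exp_add]; congr 1; ring
    simp only []
    linear_combination (cst α j * cst α k * (HP j).eval (α*x) * (HP k).eval (α*x)) * hexp
  calc ∫ x : ℝ, genHermite α j x * genHermite α k x
      = ∫ x : ℝ, cst α j * cst α k * φ (α * x) := by congr 1; funext x; exact h1 x
    _ = cst α j * cst α k * ∫ x : ℝ, φ (α * x) := MeasureTheory.integral_const_mul _ _
    _ = cst α j * cst α k * (|α⁻¹| • ∫ y : ℝ, φ y) := by
        rw [MeasureTheory.Measure.integral_comp_mul_left φ α]
    _ = if j = k then 1 else 0 := by
        rw [hφ, Korth j k]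
        rcases eq_or_ne j k with h | h
        · subst h
          rw [if_pos rfl, if_pos rfl, abs_of_pos (inv_pos.2 hα), smul_eq_mul]
          have hsq : cst α j * cst α j = α / (2^j * j.factorial * Real.sqrt π) := by
            have := cst_sq (α := α) hα j; nlinarith [this]
          have h1 : (0:ℝ) < Real.sqrt π := Real.sqrt_pos.2 Real.pi_pos
          have h2 : ((j.factorial : ℝ)) ≠ 0 := Nat.cast_ne_zero.2 j.factorial_ne_zero
          field_simp [hsq]
          rw [cst_sq hα j]
          field_simp
        · rw [if_neg h, if_neg h]; simp

lemma gen_hasDerivAt' (k : ℕ) (x : ℝ) : HasDerivAt (genHermite α k) (ghD α k x) x := by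
  have h1 := gen_hasDerivAt hα k x
  have h2 := gen_x_mul hα k x
  have hs : Real.sqrt (2*(k:ℝ)) = 2 * Real.sqrt ((k:ℝ)/2) := by
    rw [show 2*(k:ℝ) = 4 * ((k:ℝ)/2) by ring, show (4:ℝ) = 2^2 by norm_num,
      Real.sqrt_mul (by positivity), Real.sqrt_sq (by norm_num)]
  convert h1 using 1
  rw [ghD]
  linear_combination h2 - (α * genHermite α (k-1) x) * hs

lemma ghSum_hasDerivAt (a : ℕ → ℝ) (M : ℕ) (x : ℝ) :
    HasDerivAt (ghSum α a M) (∑ k ∈ Finset.range M, a k * ghD α k x) x :=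
  HasDerivAt.fun_sum fun k _ => ((gen_hasDerivAt' hα k x).const_mul (a k))

lemma Dx_ghSum (a : ℕ → ℝ) (M : ℕ) :
    Dx α (ghSum α a (M+1))
      = ghSum α (fun k => α * Real.sqrt (2*((k:ℝ)+1)) * a (k+1)) M := by
  funext x
  rw [Dx]
  rw [(ghSum_hasDerivAt hα a (M+1) x).deriv]
  have hpt : ∀ k : ℕ, a k * ghD α k x + α^2 * x * (a k * genHermite α k x)
      = a k * (α * Real.sqrt (2*(k:ℝ)) * genHermite α (k-1) x) := by
    intro k
    have h2 := gen_x_mul hα k x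
    have hs : Real.sqrt (2*(k:ℝ)) = 2 * Real.sqrt ((k:ℝ)/2) := by
      rw [show 2*(k:ℝ) = 4 * ((k:ℝ)/2) by ring, show (4:ℝ) = 2^2 by norm_num,
        Real.sqrt_mul (by positivity), Real.sqrt_sq (by norm_num)]
    rw [ghD]
    linear_combination (a k) * h2 - (a k * α * genHermite α (k-1) x) * hs
  have : ∑ k ∈ Finset.range (M+1), a k * ghD α k x + α^2 * x * ghSum α a (M+1) x
      = ∑ k ∈ Finset.range (M+1), (a k * ghD α k x + α^2 * x * (a k * genHermite α k x)) := by
    rw [ghSum, Finset.mul_sum, ← Finset.sum_add_distrib]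
  rw [this]
  rw [Finset.sum_congr rfl fun k _ => hpt k]
  rw [Finset.sum_range_succ']
  rw [ghSum]
  norm_num
  apply Finset.sum_congr rfl
  intro k _
  ring

/-- expansion of weighted quadratic integrals -/
lemma integral_poly_ghSum_mul (p : Polynomial ℝ) (a b : ℕ → ℝ) (M M' : ℕ) :
    ∫ x : ℝ, p.eval x * (ghSum α a M x * ghSum α b M' x)
      = ∑ j ∈ Finset.range M, ∑ k ∈ Finset.range M',
          a j * b k * ∫ x : ℝ, p.eval x * (genHermite α j x * genHermite α k x) := by
  have hint : ∀ j k : ℕ, MeasureTheory.Integrable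
      (fun x : ℝ => p.eval x * (genHermite α j x * genHermite α k x)) := by
    intro j k
    have : PG (0 + (α^2/2 + α^2/2)) (fun x => p.eval x * (genHermite α j x * genHermite α k x)) :=
      (PG_poly p).mul ((PG_gen j).mul (PG_gen k))
    apply this.integrable
    positivity
  have hpt : ∀ x : ℝ, p.eval x * (ghSum α a M x * ghSum α b M' x)
      = ∑ j ∈ Finset.range M, ∑ k ∈ Finset.range M',
          a j * b k * (p.eval x * (genHermite α j x * genHermite α k x)) := by
    intro x
    rw [ghSum, ghSum, Finset.sum_mul_sum, Finset.mul_sum]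
    congr 1; funext j
    rw [Finset.mul_sum]
    congr 1; funext k
    ring
  calc ∫ x : ℝ, p.eval x * (ghSum α a M x * ghSum α b M' x)
      = ∫ x : ℝ, ∑ j ∈ Finset.range M, ∑ k ∈ Finset.range M',
          a j * b k * (p.eval x * (genHermite α j x * genHermite α k x)) := by
        congr 1; funext x; exact hpt x
    _ = ∑ j ∈ Finset.range M, ∫ x : ℝ, ∑ k ∈ Finset.range M',
          a j * b k * (p.eval x * (genHermite α j x * genHermite α k x)) := by
        apply MeasureTheory.integral_finset_sum
        intro j _
        apply MeasureTheory.integrable_finset_sum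
        intro k _
        exact ((hint j k).const_mul _)
    _ = ∑ j ∈ Finset.range M, ∑ k ∈ Finset.range M',
          a j * b k * ∫ x : ℝ, p.eval x * (genHermite α j x * genHermite α k x) := by
        congr 1; funext j
        rw [MeasureTheory.integral_finset_sum _ (fun k _ => (hint j k).const_mul _)]
        congr 1; funext k
        exact MeasureTheory.integral_const_mul _ _

lemma integral_ghSum_mul (a b : ℕ → ℝ) (M : ℕ) :
    ∫ x : ℝ, ghSum α a M x * ghSum α b M x = ∑ k ∈ Finset.range M, a k * b k := by
  have h := integral_poly_ghSum_mul hα (1 : Polynomial ℝ) a b M M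
  simp only [Polynomial.eval_one, one_mul] at h
  rw [h]
  have : ∀ j ∈ Finset.range M, ∀ k ∈ Finset.range M,
      a j * b k * ∫ x : ℝ, genHermite α j x * genHermite α k x
        = a j * b k * (if j = k then 1 else 0) := by
    intro j _ k _; rw [gen_orth hα]
  rw [Finset.sum_congr rfl fun j hj => Finset.sum_congr rfl fun k hk => this j hj k hk]
  apply Finset.sum_congr rfl
  intro j hj
  rw [Finset.sum_eq_single j (fun k _ hk => by simp [Ne.symm hk]) (fun hj' => absurd hj hj')]
  simp

lemma integral_ghSum_single (a : ℕ → ℝ) (M i : ℕ) (h : i < M) :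
    ∫ x : ℝ, ghSum α a M x * genHermite α i x = a i := by
  have hpt : ∀ x : ℝ, ghSum α a M x * genHermite α i x
      = ghSum α a M x * ghSum α (fun j => if j = i then 1 else 0) M x := by
    intro x
    rw [ghSum, ghSum]
    congr 1
    have hterm : ∀ j, (if j = i then (1:ℝ) else 0) * genHermite α j x
        = (if j = i then genHermite α j x else 0) := fun j => by
      by_cases hj : j = i <;> simp [hj]
    rw [Finset.sum_congr rfl fun j _ => hterm j,
      Finset.sum_ite_eq' (Finset.range M) i (fun j => genHermite α j x),
      if_pos (Finset.mem_range.2 h)]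
  rw [show (fun x : ℝ => ghSum α a M x * genHermite α i x)
    = fun x => ghSum α a M x * ghSum α (fun j => if j = i then 1 else 0) M x from funext hpt]
  rw [integral_ghSum_mul hα]
  have hterm : ∀ k, a k * (if k = i then (1:ℝ) else 0) = (if k = i then a k else 0) := fun k => by
    by_cases hk : k = i <;> simp [hk]
  rw [Finset.sum_congr rfl fun k _ => hterm k,
    Finset.sum_ite_eq' (Finset.range M) i a, if_pos (Finset.mem_range.2 h)]

end GH2

section GH3
variable {α : ℝ} (hα : 0 < α)

lemma PG_ghD_sum (a : ℕ → ℝ) (M : ℕ) :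
    PG (α^2/2) (fun x => ∑ k ∈ Finset.range M, a k * ghD α k x) :=
  PG.sum fun k _ => (PG_ghD k).const_mul (a k)

/-- Integration by parts for two PG functions. -/
lemma ibp_PG {F G F' G' : ℝ → ℝ} {b c : ℝ} (hb : 0 < b) (hc : 0 < c)
    (hFd : ∀ x, HasDerivAt F (F' x) x) (hGd : ∀ x, HasDerivAt G (G' x) x)
    (hF : PG b F) (hG : PG c G) (hF' : PG b F') (hG' : PG c G') :
    ∫ x : ℝ, F' x * G x = - ∫ x : ℝ, F x * G' x := by
  have key := MeasureTheory.integral_mul_deriv_eq_deriv_mul_of_integrable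
    (u := F) (u' := F') (v := G) (v' := G') (fun x _ => hFd x) (fun x _ => hGd x)
    (show MeasureTheory.Integrable (F * G') from (hF.mul hG').integrable (by positivity))
    (show MeasureTheory.Integrable (F' * G) from (hF'.mul hG).integrable (by positivity))
    (show MeasureTheory.Integrable (F * G) from (hF.mul hG).integrable (by positivity))
  have h2 : ∫ x : ℝ, F x * G' x = - ∫ x : ℝ, F' x * G x := key
  linarith [h2]

include hα

/-- A bounded continuous function times an integrable PG function is integrable. -/
lemma PG_bdd_mul {g h : ℝ → ℝ} {b : ℝ} (hb : 0 < b) (hgc : Continuous g)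
    (hgb : ∃ C, ∀ x, |g x| ≤ C) (hh : PG b h) :
    MeasureTheory.Integrable (fun x => g x * h x) := by
  obtain ⟨C, hC⟩ := hgb
  have := MeasureTheory.Integrable.bdd_mul (hh.integrable hb)
    hgc.aestronglyMeasurable (Filter.Eventually.of_forall fun x => by simpa using hC x)
  exact this

/-- `∫ f(u) u' = 0` for `u` a Hermite sum and `f` C¹ with `f 0 = 0` having an
anti-derivative structure. -/
lemma integral_fcomp_deriv_zero (f : ℝ → ℝ) (hf : ContDiff ℝ 1 f)
    (F : ℝ → ℝ) (hF : ∀ y : ℝ, HasDerivAt F (y * deriv f y) y)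
    (a : ℕ → ℝ) (M : ℕ) :
    ∫ x : ℝ, f (ghSum α a M x) * (∑ k ∈ Finset.range M, a k * ghD α k x) = 0 := by
  set u := ghSum α a M with hu
  set u' := fun x => ∑ k ∈ Finset.range M, a k * ghD α k x with hu'
  have hud : ∀ x, HasDerivAt u (u' x) x := fun x => ghSum_hasDerivAt hα a M x
  set G : ℝ → ℝ := fun y => y * f y - F y with hG
  have hGd : ∀ y, HasDerivAt G (f y) y := by
    intro y
    have h1 : HasDerivAt (fun y : ℝ => y * f y) (1 * f y + y * deriv f y) y :=
      (hasDerivAt_id y).mul ((hf.differentiable one_ne_zero) y).hasDerivAt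
    have := h1.fun_sub (hF y)
    simpa using this
  have hφ : ∀ x, HasDerivAt (fun x => G (u x)) (f (u x) * u' x) x := by
    intro x
    have := (hGd (u x)).comp x (hud x)
    exact this
  have hPGu : PG (α^2/2) u := PG_ghSum a M
  have hPGu' : PG (α^2/2) u' := PG_ghD_sum a M
  have hbpos : (0:ℝ) < α^2/2 := by positivity
  -- boundedness of f ∘ u
  have hub : ∃ C, ∀ x, |u x| ≤ C := hPGu.bounded hbpos
  obtain ⟨C, hC⟩ := hub
  have hfu_cont : Continuous (fun x => f (u x)) :=
    (hf.continuous).comp hPGu.continuous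
  have hfu_bdd : ∃ C', ∀ x, |f (u x)| ≤ C' := by
    obtain ⟨C', hC'⟩ := (isCompact_Icc (a := -C) (b := C)).exists_bound_of_continuousOn
      (hf.continuous.continuousOn (s := Set.Icc (-C) C))
    refine ⟨C', fun x => ?_⟩
    have := hC' (u x) (by constructor <;> [linarith [(abs_le.1 (hC x)).1];
      exact (abs_le.1 (hC x)).2])
    simpa using this
  have hint : MeasureTheory.Integrable (fun x => f (u x) * u' x) :=
    PG_bdd_mul hα hbpos hfu_cont hfu_bdd hPGu'
  -- limits
  have hutop : Filter.Tendsto u Filter.atTop (nhds 0) := hPGu.tendsto_atTop hbpos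
  have hubot : Filter.Tendsto u Filter.atBot (nhds 0) := hPGu.tendsto_atBot hbpos
  have hGcont : Filter.Tendsto G (nhds 0) (nhds (G 0)) := (hGd 0).continuousAt.tendsto
  have htop : Filter.Tendsto (fun x => G (u x)) Filter.atTop (nhds (G 0)) :=
    hGcont.comp hutop
  have hbot : Filter.Tendsto (fun x => G (u x)) Filter.atBot (nhds (G 0)) :=
    hGcont.comp hubot
  have := MeasureTheory.integral_of_hasDerivAt_of_tendsto hφ hint hbot htop
  simpa using this

lemma integral_mul_ghD (h : ℝ → ℝ)
    (hint : ∀ i, MeasureTheory.Integrable (fun x => h x * genHermite α i x)) (k : ℕ) :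
    ∫ x : ℝ, h x * ghD α k x
      = α*Real.sqrt ((k:ℝ)/2) * (∫ x : ℝ, h x * genHermite α (k-1) x)
        - α*Real.sqrt (((k:ℝ)+1)/2) * (∫ x : ℝ, h x * genHermite α (k+1) x) := by
  have hpt : ∀ x : ℝ, h x * ghD α k x
      = α*Real.sqrt ((k:ℝ)/2) * (h x * genHermite α (k-1) x)
        - α*Real.sqrt (((k:ℝ)+1)/2) * (h x * genHermite α (k+1) x) := by
    intro x; rw [ghD]; ring
  rw [show (fun x : ℝ => h x * ghD α k x) = fun x =>
    α*Real.sqrt ((k:ℝ)/2) * (h x * genHermite α (k-1) x)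
      - α*Real.sqrt (((k:ℝ)+1)/2) * (h x * genHermite α (k+1) x) from funext hpt]
  rw [MeasureTheory.integral_sub ((hint (k-1)).const_mul _) ((hint (k+1)).const_mul _),
    MeasureTheory.integral_const_mul, MeasureTheory.integral_const_mul]
end GH3



/-- energy estimate for the Hermite spectral viscosity scheme with
viscosity term `ε ∂_x D_x Q_m u`: if `u(t) = Σ_{k=0}^N uh_k(t) H_k^α` solves the scheme
weakly against every `φ ∈ R_N` on `[0,T]` with initial datum `P_N u₀`, then for every
`γ > α²/2`,
`‖u(T)‖² + 2ε(1 − α²/(2γ)) ∫₀ᵀ ‖D_x Q_m u(t)‖² dt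
  ≤ ‖P_N u₀‖² + ε α² γ ∫₀ᵀ ‖x u(t)‖² dt`. -/
theorem energy_estimate_Q (α T ε : ℝ) (hα : 0 < α) (hT : 0 < T) (hε : 0 < ε)
    (m N : ℕ) (hm : 0 < m) (hmN : m < N)
    (q : ℕ → ℝ) (hq0 : ∀ k ≤ N, k ≤ m → q k = 0)
    (hq1 : ∀ k ≤ N, m < k → 1 - (m : ℝ) / (k : ℝ) ≤ q k ∧ q k < 1)
    (f : ℝ → ℝ) (hf : ContDiff ℝ 1 f) (hf0 : f 0 = 0)
    (F : ℝ → ℝ) (hF : ∀ y : ℝ, HasDerivAt F (y * deriv f y) y)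
    (u₀ : ℝ → ℝ) (hu₀ : MemLp u₀ 2 (volume : Measure ℝ))
    (uh uh' : ℕ → ℝ → ℝ)
    (huh : ∀ k ≤ N, ∀ t ∈ Set.Icc (0 : ℝ) T, HasDerivAt (uh k) (uh' k t) t)
    (u : ℝ → ℝ → ℝ)
    (hu : u = fun t x => ∑ k ∈ Finset.range (N + 1), uh k t * genHermite α k x)
    (hinit : ∀ x : ℝ, u 0 x
      = ∑ n ∈ Finset.range (N + 1), (∫ y : ℝ, u₀ y * genHermite α n y) * genHermite α n x)
    (hscheme : ∀ t ∈ Set.Icc (0 : ℝ) T, ∀ c : ℕ → ℝ,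
      (∫ x : ℝ, (∑ k ∈ Finset.range (N + 1), uh' k t * genHermite α k x) *
          (∑ j ∈ Finset.range (N + 1), c j * genHermite α j x))
        + (∫ x : ℝ, deriv (fun z => ∑ n ∈ Finset.range (N + 2),
              (∫ y : ℝ, f (u t y) * genHermite α n y) * genHermite α n z) x *
            (∑ j ∈ Finset.range (N + 1), c j * genHermite α j x))
        - ε * (∫ x : ℝ, deriv (Dx α (fun z => ∑ k ∈ Finset.range (N + 1),
              q k * uh k t * genHermite α k z)) x *
            (∑ j ∈ Finset.range (N + 1), c j * genHermite α j x)) = 0) :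
    ∀ γ : ℝ, α ^ 2 / 2 < γ →
      (∫ x : ℝ, (u T x) ^ 2)
          + 2 * ε * (1 - α ^ 2 / (2 * γ)) *
            ∫ t in (0 : ℝ)..T, ∫ x : ℝ, (Dx α (fun z => ∑ k ∈ Finset.range (N + 1),
              q k * uh k t * genHermite α k z) x) ^ 2
        ≤ (∫ x : ℝ, (∑ n ∈ Finset.range (N + 1),
              (∫ y : ℝ, u₀ y * genHermite α n y) * genHermite α n x) ^ 2)
          + ε * α ^ 2 * γ * ∫ t in (0 : ℝ)..T, ∫ x : ℝ, (x * u t x) ^ 2 := by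
  intro γ hγ
  have hα2 : (0:ℝ) < α^2/2 := by positivity
  have hγ0 : (0:ℝ) < γ := lt_trans hα2 hγ
  -- coefficient notations
  set A : ℝ → ℕ → ℝ := fun t k => uh k t with hA
  set w : ℝ → ℕ → ℝ := fun t k => α * Real.sqrt (2*((k:ℝ)+1)) * (q (k+1) * uh (k+1) t) with hw
  set d : ℝ → ℕ → ℝ := fun t k => α * Real.sqrt (2*((k:ℝ)+1)) * uh (k+1) t with hd
  have hufun : ∀ t, u t = ghSum α (A t) (N+1) := by
    intro t; rw [hu]; rfl
  have hVfun : ∀ t, Dx α (fun z => ∑ k ∈ Finset.range (N+1),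
      q k * uh k t * genHermite α k z) = ghSum α (w t) N := by
    intro t
    exact Dx_ghSum hα (fun k => q k * uh k t) N
  -- derivative of u in x
  have hudDeriv : ∀ t x, HasDerivAt (u t)
      (∑ k ∈ Finset.range (N+1), A t k * ghD α k x) x := by
    intro t x; rw [hufun t]; exact ghSum_hasDerivAt hα _ _ x
  have hud_eq : ∀ t x, (∑ k ∈ Finset.range (N+1), A t k * ghD α k x)
      = ghSum α (d t) N x - α^2*x*(u t x) := by
    intro t x
    have h := congrFun (Dx_ghSum hα (A t) N) x
    rw [Dx] at h
    rw [(ghSum_hasDerivAt hα (A t) (N+1) x).deriv] at h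
    rw [hufun t]
    rw [show ghSum α (fun k => α * Real.sqrt (2*((k:ℝ)+1)) * A t (k+1)) N x
      = ghSum α (d t) N x from rfl] at h
    linarith [h]
  -- boundedness of f ∘ u t
  have hfu_int : ∀ t (g : ℝ → ℝ), PG (α^2/2) g →
      MeasureTheory.Integrable (fun x => f (u t x) * g x) := by
    intro t g hg
    obtain ⟨C, hC⟩ := (PG_ghSum (α := α) (A t) (N+1)).bounded hα2
    have hucont : Continuous (u t) := by rw [hufun t]; exact (PG_ghSum (A t) (N+1)).continuous
    have hfc : Continuous (fun x => f (u t x)) := hf.continuous.comp hucont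
    have hfb : ∃ C', ∀ x, |f (u t x)| ≤ C' := by
      obtain ⟨C', hC'⟩ := (isCompact_Icc (a := -C) (b := C)).exists_bound_of_continuousOn
        (hf.continuous.continuousOn (s := Set.Icc (-C) C))
      refine ⟨C', fun x => ?_⟩
      have hmem : u t x ∈ Set.Icc (-C) C := by
        rw [hufun t]
        constructor
        · linarith [(abs_le.1 (hC x)).1]
        · exact (abs_le.1 (hC x)).2
      simpa using hC' (u t x) hmem
    exact PG_bdd_mul hα hα2 hfc hfb hg
  -- the main scheme consequence
  have key : ∀ t ∈ Set.Icc (0:ℝ) T,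
      (∑ k ∈ Finset.range (N+1), uh' k t * uh k t)
        = ε * (- (∫ x : ℝ, ghSum α (w t) N x * ghSum α (d t) N x)
               + α^2 * ∫ x : ℝ, x * u t x * ghSum α (w t) N x) := by
    intro t ht
    have hs := hscheme t ht (fun j => uh j t)
    have hT1 : (∫ x : ℝ, (∑ k ∈ Finset.range (N + 1), uh' k t * genHermite α k x) *
          (∑ j ∈ Finset.range (N + 1), uh j t * genHermite α j x))
        = ∑ k ∈ Finset.range (N+1), uh' k t * uh k t :=
      integral_ghSum_mul hα (fun k => uh' k t) (fun k => uh k t) (N+1)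
    -- Term 2 vanishes
    have hT2 : (∫ x : ℝ, deriv (fun z => ∑ n ∈ Finset.range (N + 2),
          (∫ y : ℝ, f (u t y) * genHermite α n y) * genHermite α n z) x *
          (∑ j ∈ Finset.range (N + 1), uh j t * genHermite α j x)) = 0 := by
      set g : ℕ → ℝ := fun n => ∫ y : ℝ, f (u t y) * genHermite α n y with hg
      have hder : ∀ x : ℝ, deriv (fun z => ∑ n ∈ Finset.range (N + 2),
          (∫ y : ℝ, f (u t y) * genHermite α n y) * genHermite α n z) x
            = ∑ n ∈ Finset.range (N+2), g n * ghD α n x :=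
        fun x => (ghSum_hasDerivAt hα g (N+2) x).deriv
      have hstep1 : (∫ x : ℝ, deriv (fun z => ∑ n ∈ Finset.range (N + 2),
          (∫ y : ℝ, f (u t y) * genHermite α n y) * genHermite α n z) x *
          (∑ j ∈ Finset.range (N + 1), uh j t * genHermite α j x))
          = ∫ x : ℝ, (∑ n ∈ Finset.range (N+2), g n * ghD α n x) * ghSum α (A t) (N+1) x := by
        congr 1; funext x; rw [hder x]; rfl
      rw [hstep1]
      -- integration by parts
      have hibp := ibp_PG (b := α^2/2) (c := α^2/2) hα2 hα2
        (F := ghSum α g (N+2)) (F' := fun x => ∑ n ∈ Finset.range (N+2), g n * ghD α n x)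
        (G := ghSum α (A t) (N+1))
        (G' := fun x => ∑ k ∈ Finset.range (N+1), A t k * ghD α k x)
        (fun x => ghSum_hasDerivAt hα g (N+2) x)
        (fun x => ghSum_hasDerivAt hα (A t) (N+1) x)
        (PG_ghSum g (N+2)) (PG_ghSum (A t) (N+1)) (PG_ghD_sum g (N+2)) (PG_ghD_sum (A t) (N+1))
      rw [hibp]
      -- now show ∫ ghSum g * u' = ∫ f(u) u' = 0
      have hsum1 : (∫ x : ℝ, ghSum α g (N+2) x *
            (∑ k ∈ Finset.range (N+1), A t k * ghD α k x))
          = ∑ k ∈ Finset.range (N+1), A t k * ∫ x : ℝ, ghSum α g (N+2) x * ghD α k x := by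
        rw [show (fun x : ℝ => ghSum α g (N+2) x * (∑ k ∈ Finset.range (N+1), A t k * ghD α k x))
          = fun x : ℝ => ∑ k ∈ Finset.range (N+1), A t k * (ghSum α g (N+2) x * ghD α k x) from
          funext fun x => by rw [Finset.mul_sum]; exact Finset.sum_congr rfl fun k _ => by ring]
        rw [MeasureTheory.integral_finset_sum _ (fun k _ =>
          (((PG_ghSum (α := α) g (N+2)).mul (PG_ghD k)).integrable (by positivity)).const_mul _)]
        exact Finset.sum_congr rfl fun k _ => MeasureTheory.integral_const_mul _ _
      have hsum2 : (∫ x : ℝ, f (u t x) *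
            (∑ k ∈ Finset.range (N+1), A t k * ghD α k x))
          = ∑ k ∈ Finset.range (N+1), A t k * ∫ x : ℝ, f (u t x) * ghD α k x := by
        rw [show (fun x : ℝ => f (u t x) * (∑ k ∈ Finset.range (N+1), A t k * ghD α k x))
          = fun x : ℝ => ∑ k ∈ Finset.range (N+1), A t k * (f (u t x) * ghD α k x) from
          funext fun x => by rw [Finset.mul_sum]; exact Finset.sum_congr rfl fun k _ => by ring]
        rw [MeasureTheory.integral_finset_sum _ (fun k _ =>
          ((hfu_int t (ghD α k) (PG_ghD k)).const_mul _))]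
        exact Finset.sum_congr rfl fun k _ => MeasureTheory.integral_const_mul _ _
      have hterm : ∀ k, k < N+1 → (∫ x : ℝ, ghSum α g (N+2) x * ghD α k x)
          = ∫ x : ℝ, f (u t x) * ghD α k x := by
        intro k hk
        rw [integral_mul_ghD hα _ (fun i =>
            ((PG_ghSum (α := α) g (N+2)).mul (PG_gen i)).integrable (by positivity)) k,
          integral_mul_ghD hα _ (fun i => hfu_int t (genHermite α i) (PG_gen i)) k]
        rw [integral_ghSum_single hα g (N+2) (k-1) (by omega),
          integral_ghSum_single hα g (N+2) (k+1) (by omega)]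
      have hzero : (∫ x : ℝ, f (u t x) *
            (∑ k ∈ Finset.range (N+1), A t k * ghD α k x)) = 0 := by
        have := integral_fcomp_deriv_zero hα f hf F hF (A t) (N+1)
        rw [← hufun t] at this
        exact this
      rw [hsum1, Finset.sum_congr rfl (fun k hk => by
        rw [hterm k (Finset.mem_range.1 hk)]), ← hsum2, hzero, neg_zero]
    -- Term 3
    have hT3 : (∫ x : ℝ, deriv (Dx α (fun z => ∑ k ∈ Finset.range (N + 1),
          q k * uh k t * genHermite α k z)) x *
          (∑ j ∈ Finset.range (N + 1), uh j t * genHermite α j x))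
        = - (∫ x : ℝ, ghSum α (w t) N x * ghSum α (d t) N x)
          + α^2 * ∫ x : ℝ, x * u t x * ghSum α (w t) N x := by
      have hstep1 : (∫ x : ℝ, deriv (Dx α (fun z => ∑ k ∈ Finset.range (N + 1),
            q k * uh k t * genHermite α k z)) x *
            (∑ j ∈ Finset.range (N + 1), uh j t * genHermite α j x))
          = ∫ x : ℝ, (∑ n ∈ Finset.range N, w t n * ghD α n x) * ghSum α (A t) (N+1) x := by
        congr 1; funext x
        rw [hVfun t, (ghSum_hasDerivAt hα (w t) N x).deriv]
        rfl
      rw [hstep1]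
      have hibp := ibp_PG (b := α^2/2) (c := α^2/2) hα2 hα2
        (F := ghSum α (w t) N) (F' := fun x => ∑ n ∈ Finset.range N, w t n * ghD α n x)
        (G := ghSum α (A t) (N+1))
        (G' := fun x => ∑ k ∈ Finset.range (N+1), A t k * ghD α k x)
        (fun x => ghSum_hasDerivAt hα (w t) N x)
        (fun x => ghSum_hasDerivAt hα (A t) (N+1) x)
        (PG_ghSum (w t) N) (PG_ghSum (A t) (N+1)) (PG_ghD_sum (w t) N) (PG_ghD_sum (A t) (N+1))
      rw [hibp]
      have hsplit : (∫ x : ℝ, ghSum α (w t) N x *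
            (∑ k ∈ Finset.range (N+1), A t k * ghD α k x))
          = (∫ x : ℝ, ghSum α (w t) N x * ghSum α (d t) N x)
            - α^2 * ∫ x : ℝ, x * u t x * ghSum α (w t) N x := by
        have hpt : ∀ x : ℝ, ghSum α (w t) N x *
              (∑ k ∈ Finset.range (N+1), A t k * ghD α k x)
            = ghSum α (w t) N x * ghSum α (d t) N x
              - α^2 * (x * u t x * ghSum α (w t) N x) := by
          intro x; rw [hud_eq t x]; ring
        rw [show (fun x : ℝ => ghSum α (w t) N x *
            (∑ k ∈ Finset.range (N+1), A t k * ghD α k x))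
          = fun x : ℝ => ghSum α (w t) N x * ghSum α (d t) N x
              - α^2 * (x * u t x * ghSum α (w t) N x) from funext hpt]
        have hI3 : MeasureTheory.Integrable (fun x : ℝ => x * u t x * ghSum α (w t) N x) := by
          have h0 : PG (α^2/2 + α^2/2)
              (fun x : ℝ => x * (ghSum α (A t) (N+1) x * ghSum α (w t) N x)) :=
            PG.x_mul ((PG_ghSum (A t) (N+1)).mul (PG_ghSum (w t) N))
          refine (h0.integrable (by positivity)).congr (Filter.EventuallyEq.of_eq ?_)
          funext x
          rw [hufun t]
          ring
        rw [MeasureTheory.integral_sub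
          (((PG_ghSum (α := α) (w t) N).mul (PG_ghSum (d t) N)).integrable (by positivity))
          (hI3.const_mul (α^2)), MeasureTheory.integral_const_mul]
      rw [hsplit]
      ring
    rw [hT1, hT2, hT3] at hs
    linarith [hs]
  -- energy and auxiliary functions of time
  set E : ℝ → ℝ := fun t => ∑ k ∈ Finset.range (N+1), (uh k t)^2 with hE
  set S1 : ℝ → ℝ := fun t => ∫ x : ℝ, ghSum α (w t) N x * ghSum α (d t) N x with hS1
  set S2 : ℝ → ℝ := fun t => ∫ x : ℝ, x * u t x * ghSum α (w t) N x with hS2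
  set W1 : ℝ → ℝ := fun t => ∫ x : ℝ, (ghSum α (w t) N x)^2 with hW1
  set W2 : ℝ → ℝ := fun t => ∫ x : ℝ, (x * u t x)^2 with hW2
  set D : ℝ → ℝ := fun t => 2 * (ε * (- S1 t + α^2 * S2 t)) with hD
  have hEderiv : ∀ t ∈ Set.Icc (0:ℝ) T, HasDerivAt E (D t) t := by
    intro t ht
    have h1 : HasDerivAt E (∑ k ∈ Finset.range (N+1), 2 * uh k t * uh' k t) t := by
      apply HasDerivAt.fun_sum
      intro k hk
      have hk' : k ≤ N := by have := Finset.mem_range.1 hk; omega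
      simpa using (huh k hk' t ht).fun_pow 2
    have h2 : D t = ∑ k ∈ Finset.range (N+1), 2 * uh k t * uh' k t := by
      simp only [hD]
      rw [← key t ht, Finset.mul_sum]
      exact Finset.sum_congr rfl fun k _ => by ring
    rw [h2]
    exact h1
  -- continuity of everything in t
  have huhc : ∀ k, k ≤ N → ContinuousOn (fun t => uh k t) (Set.Icc (0:ℝ) T) :=
    fun k hk t ht => ((huh k hk t ht).continuousAt).continuousWithinAt
  have hwc : ∀ k, k < N → ContinuousOn (fun t => w t k) (Set.Icc (0:ℝ) T) := by
    intro k hk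
    simp only [hw]
    exact continuousOn_const.mul (continuousOn_const.mul (huhc (k+1) (by omega)))
  have hdc : ∀ k, k < N → ContinuousOn (fun t => d t k) (Set.Icc (0:ℝ) T) := by
    intro k hk
    simp only [hd]
    exact continuousOn_const.mul (huhc (k+1) (by omega))
  have hS1eq : ∀ t, S1 t = ∑ k ∈ Finset.range N, w t k * d t k :=
    fun t => integral_ghSum_mul hα (w t) (d t) N
  have hW1eq : ∀ t, W1 t = ∑ k ∈ Finset.range N, w t k * w t k := by
    intro t
    simp only [hW1]
    rw [show (fun x : ℝ => (ghSum α (w t) N x)^2)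
      = fun x : ℝ => ghSum α (w t) N x * ghSum α (w t) N x from funext fun x => by ring]
    exact integral_ghSum_mul hα (w t) (w t) N
  have hS2eq : ∀ t, S2 t = ∑ j ∈ Finset.range (N+1), ∑ k ∈ Finset.range N,
      A t j * w t k * ∫ x : ℝ, x * (genHermite α j x * genHermite α k x) := by
    intro t
    have h := integral_poly_ghSum_mul hα Polynomial.X (A t) (w t) (N+1) N
    simp only [Polynomial.eval_X] at h
    rw [show S2 t = ∫ x : ℝ, x * (ghSum α (A t) (N+1) x * ghSum α (w t) N x) by
      simp only [hS2]; congr 1; funext x; rw [hufun t]; ring]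
    exact h
  have hW2eq : ∀ t, W2 t = ∑ j ∈ Finset.range (N+1), ∑ k ∈ Finset.range (N+1),
      A t j * A t k * ∫ x : ℝ, x^2 * (genHermite α j x * genHermite α k x) := by
    intro t
    have h := integral_poly_ghSum_mul hα (Polynomial.X^2) (A t) (A t) (N+1) (N+1)
    simp only [Polynomial.eval_pow, Polynomial.eval_X] at h
    rw [show W2 t = ∫ x : ℝ, x^2 * (ghSum α (A t) (N+1) x * ghSum α (A t) (N+1) x) by
      simp only [hW2]; congr 1; funext x; rw [hufun t]; ring]
    exact h
  have hS1c : ContinuousOn S1 (Set.Icc (0:ℝ) T) := by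
    rw [show S1 = fun t => ∑ k ∈ Finset.range N, w t k * d t k from funext hS1eq]
    exact continuousOn_finset_sum _ fun k hk =>
      (hwc k (Finset.mem_range.1 hk)).mul (hdc k (Finset.mem_range.1 hk))
  have hW1c : ContinuousOn W1 (Set.Icc (0:ℝ) T) := by
    rw [show W1 = fun t => ∑ k ∈ Finset.range N, w t k * w t k from funext hW1eq]
    exact continuousOn_finset_sum _ fun k hk =>
      (hwc k (Finset.mem_range.1 hk)).mul (hwc k (Finset.mem_range.1 hk))
  have hAc : ∀ j, j < N+1 → ContinuousOn (fun t => A t j) (Set.Icc (0:ℝ) T) := by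
    intro j hj
    simp only [hA]
    exact huhc j (by omega)
  have hS2c : ContinuousOn S2 (Set.Icc (0:ℝ) T) := by
    rw [show S2 = fun t => ∑ j ∈ Finset.range (N+1), ∑ k ∈ Finset.range N,
      A t j * w t k * ∫ x : ℝ, x * (genHermite α j x * genHermite α k x) from funext hS2eq]
    exact continuousOn_finset_sum _ fun j hj => continuousOn_finset_sum _ fun k hk =>
      (((hAc j (Finset.mem_range.1 hj)).mul (hwc k (Finset.mem_range.1 hk))).mul
        continuousOn_const)
  have hW2c : ContinuousOn W2 (Set.Icc (0:ℝ) T) := by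
    rw [show W2 = fun t => ∑ j ∈ Finset.range (N+1), ∑ k ∈ Finset.range (N+1),
      A t j * A t k * ∫ x : ℝ, x^2 * (genHermite α j x * genHermite α k x) from funext hW2eq]
    exact continuousOn_finset_sum _ fun j hj => continuousOn_finset_sum _ fun k hk =>
      (((hAc j (Finset.mem_range.1 hj)).mul (hAc k (Finset.mem_range.1 hk))).mul
        continuousOn_const)
  have hDc : ContinuousOn D (Set.Icc (0:ℝ) T) := by
    simp only [hD]
    exact continuousOn_const.mul (continuousOn_const.mul
      ((hS1c.neg).add (continuousOn_const.mul hS2c)))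
  -- pointwise differential inequality
  have hDle : ∀ t ∈ Set.Icc (0:ℝ) T,
      D t ≤ -(2*ε*(1 - α^2/(2*γ))) * W1 t + ε*α^2*γ * W2 t := by
    intro t ht
    have hq_bounds : ∀ k, k < N → 0 ≤ q (k+1) ∧ q (k+1) ≤ 1 := by
      intro k hk
      rcases le_or_gt (k+1) m with h | h
      · rw [hq0 (k+1) (by omega) h]; norm_num
      · obtain ⟨h1, h2⟩ := hq1 (k+1) (by omega) h
        have hcast : ((k+1 : ℕ) : ℝ) = (k:ℝ)+1 := by push_cast; ring
        constructor
        · refine le_trans ?_ h1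
          rw [hcast]
          have hmle : (m:ℝ) ≤ (k:ℝ)+1 := by
            have : m ≤ k+1 := by omega
            exact_mod_cast this
          have : (m:ℝ) / ((k:ℝ)+1) ≤ 1 := by
            rw [div_le_one (by positivity)]
            exact hmle
          linarith
        · linarith
    have h1 : W1 t ≤ S1 t := by
      rw [hW1eq t, hS1eq t]
      apply Finset.sum_le_sum
      intro k hk
      have hk' := Finset.mem_range.1 hk
      obtain ⟨hqa, hqb⟩ := hq_bounds k hk'
      have hwd : w t k = q (k+1) * d t k := by simp only [hw, hd]; ring
      rw [hwd]
      nlinarith [sq_nonneg (d t k), mul_nonneg (mul_nonneg hqa (sub_nonneg.2 hqb))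
        (sq_nonneg (d t k))]
    have hIxuV : MeasureTheory.Integrable (fun x : ℝ => x * u t x * ghSum α (w t) N x) := by
      have h0 : PG (α^2/2 + α^2/2)
          (fun x : ℝ => x * (ghSum α (A t) (N+1) x * ghSum α (w t) N x)) :=
        PG.x_mul ((PG_ghSum (A t) (N+1)).mul (PG_ghSum (w t) N))
      refine (h0.integrable (by positivity)).congr (Filter.EventuallyEq.of_eq ?_)
      funext x; rw [hufun t]; ring
    have hIV2 : MeasureTheory.Integrable (fun x : ℝ => (ghSum α (w t) N x)^2) := by
      have h0 : PG (α^2/2 + α^2/2)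
          (fun x : ℝ => ghSum α (w t) N x * ghSum α (w t) N x) :=
        (PG_ghSum (w t) N).mul (PG_ghSum (w t) N)
      refine (h0.integrable (by positivity)).congr (Filter.EventuallyEq.of_eq ?_)
      funext x; ring
    have hIxu2 : MeasureTheory.Integrable (fun x : ℝ => (x * u t x)^2) := by
      have h0 : PG (α^2/2 + α^2/2)
          (fun x : ℝ => x * (x * (ghSum α (A t) (N+1) x * ghSum α (A t) (N+1) x))) :=
        PG.x_mul (PG.x_mul ((PG_ghSum (A t) (N+1)).mul (PG_ghSum (A t) (N+1))))
      refine (h0.integrable (by positivity)).congr (Filter.EventuallyEq.of_eq ?_)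
      funext x; rw [hufun t]; ring
    have h2 : S2 t ≤ (1/(2*γ)) * W1 t + (γ/2) * W2 t := by
      have hmono := MeasureTheory.integral_mono hIxuV
        ((hIV2.const_mul (1/(2*γ))).add (hIxu2.const_mul (γ/2)))
        (fun x => by
          show x * u t x * ghSum α (w t) N x
            ≤ 1/(2*γ) * (ghSum α (w t) N x)^2 + γ/2 * (x * u t x)^2
          have hsq := sq_nonneg (ghSum α (w t) N x - γ * (x * u t x))
          have hdiv : 0 < 2*γ := by linarith
          rw [← sub_nonneg]
          have expand : 1/(2*γ) * (ghSum α (w t) N x)^2 + γ/2 * (x * u t x)^2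
              - x * u t x * ghSum α (w t) N x
              = (ghSum α (w t) N x - γ * (x * u t x))^2 / (2*γ) := by
            field_simp
            ring
          rw [expand]
          positivity)
      calc S2 t ≤ ∫ x : ℝ, (1/(2*γ) * (ghSum α (w t) N x)^2 + γ/2 * (x * u t x)^2) := hmono
        _ = (1/(2*γ)) * W1 t + (γ/2) * W2 t := by
            rw [MeasureTheory.integral_add (hIV2.const_mul _) (hIxu2.const_mul _),
              MeasureTheory.integral_const_mul, MeasureTheory.integral_const_mul]
    have ha := mul_le_mul_of_nonneg_left h1 (show (0:ℝ) ≤ 2*ε by positivity)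
    have hb := mul_le_mul_of_nonneg_left h2 (show (0:ℝ) ≤ 2*ε*α^2 by positivity)
    have hb' : 2*ε*α^2*((1/(2*γ))*W1 t + (γ/2)*W2 t) = ε*α^2/γ*W1 t + ε*α^2*γ*W2 t := by
      field_simp
    have hring : -(2*ε*(1 - α^2/(2*γ))) * W1 t = (-(2*ε) + ε*α^2/γ) * W1 t := by
      have : -(2*ε*(1 - α^2/(2*γ))) = -(2*ε) + ε*α^2/γ := by field_simp; ring
      rw [this]
    simp only [hD]
    rw [hring]
    nlinarith [ha, hb, hb']
  -- fundamental theorem of calculus and monotonicity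
  have huIcc : Set.uIcc (0:ℝ) T = Set.Icc (0:ℝ) T := Set.uIcc_of_le hT.le
  have hDii : IntervalIntegrable D MeasureTheory.volume 0 T :=
    (huIcc ▸ hDc).intervalIntegrable
  have hW1ii : IntervalIntegrable W1 MeasureTheory.volume 0 T :=
    (huIcc ▸ hW1c).intervalIntegrable
  have hW2ii : IntervalIntegrable W2 MeasureTheory.volume 0 T :=
    (huIcc ▸ hW2c).intervalIntegrable
  have hRHSii : IntervalIntegrable
      (fun t => -(2*ε*(1 - α^2/(2*γ))) * W1 t + ε*α^2*γ * W2 t) MeasureTheory.volume 0 T :=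
    (hW1ii.const_mul _).add (hW2ii.const_mul _)
  have hftc : ∫ t in (0:ℝ)..T, D t = E T - E 0 :=
    intervalIntegral.integral_eq_sub_of_hasDerivAt
      (fun t ht => hEderiv t (huIcc ▸ ht)) hDii
  have hmono2 := intervalIntegral.integral_mono_on hT.le hDii hRHSii hDle
  have hsplit2 : (∫ t in (0:ℝ)..T, (-(2*ε*(1 - α^2/(2*γ))) * W1 t + ε*α^2*γ * W2 t))
      = -(2*ε*(1 - α^2/(2*γ))) * (∫ t in (0:ℝ)..T, W1 t)
        + ε*α^2*γ * ∫ t in (0:ℝ)..T, W2 t := by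
    rw [intervalIntegral.integral_add (hW1ii.const_mul _) (hW2ii.const_mul _),
      intervalIntegral.integral_const_mul, intervalIntegral.integral_const_mul]
  -- rewrite the goal
  have hgoal1 : (∫ x : ℝ, (u T x)^2) = E T := by
    calc ∫ x : ℝ, (u T x)^2
        = ∫ x : ℝ, ghSum α (A T) (N+1) x * ghSum α (A T) (N+1) x := by
          congr 1; funext x; rw [hufun T]; ring
      _ = ∑ k ∈ Finset.range (N+1), A T k * A T k := integral_ghSum_mul hα _ _ _
      _ = E T := by
          simp only [hE, hA]
          exact Finset.sum_congr rfl fun k _ => by ring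
  have hgoal3 : (∫ x : ℝ, (∑ n ∈ Finset.range (N+1),
        (∫ y : ℝ, u₀ y * genHermite α n y) * genHermite α n x)^2) = E 0 := by
    calc (∫ x : ℝ, (∑ n ∈ Finset.range (N+1),
          (∫ y : ℝ, u₀ y * genHermite α n y) * genHermite α n x)^2)
        = ∫ x : ℝ, (u 0 x)^2 := by
          congr 1; funext x; rw [hinit x]
      _ = ∫ x : ℝ, ghSum α (A 0) (N+1) x * ghSum α (A 0) (N+1) x := by
          congr 1; funext x; rw [hufun 0]; ring
      _ = ∑ k ∈ Finset.range (N+1), A 0 k * A 0 k := integral_ghSum_mul hα _ _ _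
      _ = E 0 := by
          simp only [hE, hA]
          exact Finset.sum_congr rfl fun k _ => by ring
  have hgoal2 : (∫ t in (0:ℝ)..T, ∫ x : ℝ, (Dx α (fun z => ∑ k ∈ Finset.range (N+1),
        q k * uh k t * genHermite α k z) x)^2) = ∫ t in (0:ℝ)..T, W1 t := by
    apply intervalIntegral.integral_congr
    intro t ht
    simp only [hW1]
    congr 1
    funext x
    rw [hVfun t]
  rw [hgoal1, hgoal2, hgoal3]
  have hW2goal : (∫ t in (0:ℝ)..T, ∫ x : ℝ, (x * u t x)^2) = ∫ t in (0:ℝ)..T, W2 t := rfl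
  rw [hW2goal]
  linarith [hftc, hmono2, hsplit2]
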